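/- arXiv:2005.08545 — 3 statements merged into one kernel-verified Lean document; each statement's English description precedes it below -/
import Mathlib

section
/- Consider a finite collection 𝒞* of pairwise vertex-disjoint cycles in a directed graph with vertex set of size n, with nonnegative cycle weights γ(C). Suppose a greedy procedure selects cycles C_1, C_2, …, C_K iteratively (removing each selected cycle's vertices), such that at every iteration k, every cycle C ∈ 𝒞* that is still fully present in the remaining graph and intersects C_k satisfies γ(C) ≤ γ(C_k), and every cycle of 𝒞* intersects some selected C_k at the iteration in which its vertices are first removed. Then Σ_{C∈𝒞*} γ(C) ≤ (max_k |C_k|) · Σ_k γ(C_k). -/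
open Finset

/-- Greedy counting lemma behind the `max |C|`-approximation: if every optimal cycle `D`
is charged (via `φ`) to a greedy cycle that it intersects and that has at least its weight,
then the optimal total weight is at most `(max_k |C_k|)` times the greedy total weight. -/
theorem stmt2 {V : Type*} [DecidableEq V] {K : ℕ}
    (𝒞s : Finset (Finset V)) (γ : Finset V → ℝ) (C : Fin K → Finset V)
    (hdisj : (𝒞s : Set (Finset V)).Pairwise Disjoint)
    (hγ : ∀ D ∈ 𝒞s, 0 ≤ γ D)
    (hγC : ∀ k, 0 ≤ γ (C k))
    (φ : Finset V → Fin K)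
    (hint : ∀ D ∈ 𝒞s, (D ∩ C (φ D)).Nonempty)
    (hle : ∀ D ∈ 𝒞s, γ D ≤ γ (C (φ D))) :
    ∑ D ∈ 𝒞s, γ D ≤ ((Finset.univ.sup fun k => (C k).card : ℕ) : ℝ) * ∑ k, γ (C k) := by
  classical
  set M : ℕ := Finset.univ.sup fun k => (C k).card with hM
  -- fiberwise decomposition
  have hsplit : ∑ D ∈ 𝒞s, γ D
      = ∑ k : Fin K, ∑ D ∈ 𝒞s.filter (fun D => φ D = k), γ D := by
    rw [← Finset.sum_fiberwise 𝒞s φ γ]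
  rw [hsplit, Finset.mul_sum]
  apply Finset.sum_le_sum
  intro k _
  set F := 𝒞s.filter (fun D => φ D = k) with hF
  -- card bound on fiber
  have hcard : F.card ≤ (C k).card := by
    have hdisj' : ∀ D ∈ F, ∀ D' ∈ F, D ≠ D' →
        Disjoint (D ∩ C k) (D' ∩ C k) := by
      intro D hD D' hD' hne
      have h1 : D ∈ 𝒞s := (Finset.mem_filter.mp hD).1
      have h2 : D' ∈ 𝒞s := (Finset.mem_filter.mp hD').1
      exact Finset.disjoint_of_subset_left (Finset.inter_subset_left)
        (Finset.disjoint_of_subset_right (Finset.inter_subset_left)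
          (hdisj h1 h2 hne))
    calc F.card = ∑ D ∈ F, 1 := by simp
      _ ≤ ∑ D ∈ F, (D ∩ C k).card := by
          apply Finset.sum_le_sum
          intro D hD
          have h1 : D ∈ 𝒞s := (Finset.mem_filter.mp hD).1
          have h2 : φ D = k := (Finset.mem_filter.mp hD).2
          have := hint D h1
          rw [h2] at this
          exact Finset.card_pos.mpr this
      _ = (F.biUnion (fun D => D ∩ C k)).card :=
          (Finset.card_biUnion hdisj').symm
      _ ≤ (C k).card := by
          apply Finset.card_le_card
          intro x hx
          rcases Finset.mem_biUnion.mp hx with ⟨D, _, hxD⟩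
          exact (Finset.mem_inter.mp hxD).2
  have hle' : ∀ D ∈ F, γ D ≤ γ (C k) := by
    intro D hD
    have h1 : D ∈ 𝒞s := (Finset.mem_filter.mp hD).1
    have h2 : φ D = k := (Finset.mem_filter.mp hD).2
    have := hle D h1
    rwa [h2] at this
  calc ∑ D ∈ F, γ D ≤ ∑ D ∈ F, γ (C k) := Finset.sum_le_sum hle'
    _ = (F.card : ℝ) * γ (C k) := by
        rw [Finset.sum_const, nsmul_eq_mul]
    _ ≤ (M : ℝ) * γ (C k) := by
        apply mul_le_mul_of_nonneg_right _ (hγC k)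
        have : (C k).card ≤ M := Finset.le_sup (f := fun k => (C k).card) (Finset.mem_univ k)
        exact_mod_cast le_trans hcard this
end

section
/- (Upper bound: η* ≤ |E| + OPT_vc) Let G = (Λ, E) be a finite simple undirected graph, and construct the index coding instance with data chunks d_λ (λ ∈ Λ) and d_e (e ∈ E), and for each edge e = (x,y) three clients: c_{e,1} wanting d_e with side information {d_x, d_y}, c_{e,2} wanting d_x with side information {d_e}, and c_{e,3} wanting d_y with side information {d_e}. If Λ* ⊆ Λ is a vertex cover of G of size OPT_vc, then the coding scheme that transmits d_λ for each λ ∈ Λ*, transmits d_e for each edge with both endpoints in Λ*, and transmits d_x + d_e (respectively d_y + d_e) for each edge e = (x,y) with x ∉ Λ* (respectively y ∉ Λ*), satisfies every client using exactly |E| + |Λ*| transmissions. Hence the minimum number of transmissions satisfying all clients is at most |E| + OPT_vc. -/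
open Finset

/-- Upper bound `η* ≤ |E| + OPT_vc`: from any vertex cover `VC` of the graph `(V, E)`
one obtains a set `T` of at most `|E| + |VC|` (sparse, instantly decodable)
transmissions satisfying every client of the constructed index coding instance:
client `c_{e,1}` (wanting `d_e` with side information the endpoint chunks) and, for
each endpoint `x` of `e`, the client wanting `d_x` with side information `{d_e}`. -/
theorem stmt13 {V : Type*} [DecidableEq V] (E : Finset (Sym2 V))
    (hE : ∀ e ∈ E, ¬ e.IsDiag)
    (VC : Finset V) (hVC : ∀ e ∈ E, ∃ x ∈ e, x ∈ VC) :
    ∃ T : Finset (Finset (V ⊕ Sym2 V)),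
      T.card ≤ E.card + VC.card ∧
      (∀ t ∈ T, t.card ≤ 2) ∧
      (∀ e ∈ E, ∃ t ∈ T, Sum.inr e ∈ t ∧
        ∀ c ∈ t.erase (Sum.inr e), ∃ x ∈ e, c = Sum.inl x) ∧
      (∀ e ∈ E, ∀ x ∈ e, ∃ t ∈ T, Sum.inl x ∈ t ∧
        ∀ c ∈ t.erase (Sum.inl x), c = Sum.inr e) := by
  classical
  set te : Sym2 V → Finset (V ⊕ Sym2 V) := fun e =>
    if h : ∃ x, x ∈ e ∧ x ∉ VC then {Sum.inr e, Sum.inl h.choose} else {Sum.inr e}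
    with hte
  refine ⟨E.image te ∪ VC.image (fun v => {Sum.inl v}), ?_, ?_, ?_, ?_⟩
  · calc (E.image te ∪ VC.image (fun v => {Sum.inl v})).card
        ≤ (E.image te).card + (VC.image (fun v => {Sum.inl v})).card :=
          Finset.card_union_le _ _
      _ ≤ E.card + VC.card := add_le_add (Finset.card_image_le) (Finset.card_image_le)
  · intro t ht
    rcases Finset.mem_union.1 ht with ht | ht
    · rcases Finset.mem_image.1 ht with ⟨e, _, rfl⟩
      by_cases h : ∃ x, x ∈ e ∧ x ∉ VC
      · simp only [hte, dif_pos h]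
        exact (Finset.card_insert_le _ _).trans (by simp)
      · simp [hte, dif_neg h]
    · rcases Finset.mem_image.1 ht with ⟨v, _, rfl⟩
      simp
  · intro e he
    refine ⟨te e, Finset.mem_union_left _ (Finset.mem_image_of_mem _ he), ?_, ?_⟩
    · by_cases h : ∃ x, x ∈ e ∧ x ∉ VC <;> simp [hte, h]
    · intro c hc
      by_cases h : ∃ x, x ∈ e ∧ x ∉ VC
      · simp only [hte, dif_pos h] at hc
        rcases Finset.mem_erase.1 hc with ⟨hne, hmem⟩
        rcases Finset.mem_insert.1 hmem with rfl | hmem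
        · exact absurd rfl hne
        · exact ⟨h.choose, h.choose_spec.1, Finset.mem_singleton.1 hmem⟩
      · simp only [hte, dif_neg h] at hc
        rcases Finset.mem_erase.1 hc with ⟨hne, hmem⟩
        exact absurd (Finset.mem_singleton.1 hmem) hne
  · intro e he x hx
    by_cases hxVC : x ∈ VC
    · refine ⟨{Sum.inl x}, Finset.mem_union_right _ (Finset.mem_image_of_mem _ hxVC), by simp, ?_⟩
      intro c hc
      simp at hc
    · have h : ∃ y, y ∈ e ∧ y ∉ VC := ⟨x, hx, hxVC⟩
      have hchoose : h.choose = x := by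
        obtain ⟨z, hz, hzVC⟩ := hVC e he
        have hzx : z ≠ x := fun hzx => hxVC (hzx ▸ hzVC)
        have hc1 := h.choose_spec.1
        have hc2 := h.choose_spec.2
        induction e using Sym2.inductionOn with
        | hf a b =>
          rcases Sym2.mem_iff.1 hx with rfl | rfl <;>
          rcases Sym2.mem_iff.1 hz with rfl | rfl <;>
          rcases Sym2.mem_iff.1 hc1 with h' | h' <;>
            first
              | exact h'
              | (rw [h'] at hc2; exact absurd hzVC hc2)
              | (exact absurd rfl hzx)
      refine ⟨te e, Finset.mem_union_left _ (Finset.mem_image_of_mem _ he), ?_, ?_⟩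
      · simp [hte, dif_pos h, hchoose]
      · intro c hc
        simp only [hte, dif_pos h, hchoose] at hc
        rcases Finset.mem_erase.1 hc with ⟨hne, hmem⟩
        rcases Finset.mem_insert.1 hmem with rfl | hmem
        · rfl
        · exact absurd (Finset.mem_singleton.1 hmem) hne
end

section
/- (Lower bound: η* ≥ |E| + OPT_vc, instant decoding) In the index coding instance constructed from a graph G = (Λ, E) as above, suppose a set of instantly decodable sparse transmissions (each transmission is d or d + d' for chunks d, d') satisfies all clients. For each edge e, at least one transmission t_e ∈ {d_e, d_e + d_x, d_e + d_y} is needed to satisfy c_{e,1}. Let Λ̃ be the set of vertices x having an incident edge e such that the client wanting d_x cannot decode from t_e; then Λ̃ is a vertex cover of G, and the total number of transmissions is at least |E| + |Λ̃| ≥ |E| + OPT_vc. -/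
open Finset

/-- Lower bound `η* ≥ |E| + OPT_vc` for instant decoding: any set `T` of sparse
(instantly decodable) transmissions satisfying every client of the constructed
instance admits a vertex cover `Λt` with `|E| + |Λt| ≤ |T|`; in particular
`|T| ≥ |E| + OPT_vc`. -/
theorem stmt14 {V : Type*} [DecidableEq V] (E : Finset (Sym2 V))
    (hE : ∀ e ∈ E, ¬ e.IsDiag)
    (T : Finset (Finset (V ⊕ Sym2 V)))
    (hsparse : ∀ t ∈ T, t.card ≤ 2)
    (hc1 : ∀ e ∈ E, ∃ t ∈ T, Sum.inr e ∈ t ∧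
      ∀ c ∈ t.erase (Sum.inr e), ∃ x ∈ e, c = Sum.inl x)
    (hc23 : ∀ e ∈ E, ∀ x ∈ e, ∃ t ∈ T, Sum.inl x ∈ t ∧
      ∀ c ∈ t.erase (Sum.inl x), c = Sum.inr e) :
    ∃ Λt : Finset V, (∀ e ∈ E, ∃ x ∈ e, x ∈ Λt) ∧ E.card + Λt.card ≤ T.card := by
  classical
  -- totalize hc1
  have hc1' : ∀ e : Sym2 V, ∃ t, e ∈ E → (t ∈ T ∧ Sum.inr e ∈ t ∧
      ∀ c ∈ t.erase (Sum.inr e), ∃ x ∈ e, c = Sum.inl x) := by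
    intro e
    by_cases h : e ∈ E
    · obtain ⟨t, ht, h1, h2⟩ := hc1 e h
      exact ⟨t, fun _ => ⟨ht, h1, h2⟩⟩
    · exact ⟨∅, fun h' => absurd h' h⟩
  choose g hg using hc1'
  have hc23' : ∀ (e : Sym2 V) (x : V), ∃ t, (e ∈ E ∧ x ∈ e) → (t ∈ T ∧ Sum.inl x ∈ t ∧
      ∀ c ∈ t.erase (Sum.inl x), c = Sum.inr e) := by
    intro e x
    by_cases h : e ∈ E ∧ x ∈ e
    · obtain ⟨t, ht, h1, h2⟩ := hc23 e h.1 x h.2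
      exact ⟨t, fun _ => ⟨ht, h1, h2⟩⟩
    · exact ⟨∅, fun h' => absurd h' h⟩
  choose s hs using hc23'
  -- elements of s e x are either inl x or inr e
  have hs_mem : ∀ e ∈ E, ∀ x ∈ e, ∀ c ∈ s e x, c = Sum.inl x ∨ c = Sum.inr e := by
    intro e he x hx c hc
    by_cases h : c = Sum.inl x
    · exact Or.inl h
    · exact Or.inr ((hs e x ⟨he, hx⟩).2.2 c (Finset.mem_erase.2 ⟨h, hc⟩))
  -- if s e x is in the image of g, then inl x ∈ g e
  have hD : ∀ e ∈ E, ∀ x ∈ e, s e x ∈ E.image g → Sum.inl x ∈ g e := by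
    intro e he x hx hmem
    obtain ⟨e', he', heq⟩ := Finset.mem_image.1 hmem
    have h1 : Sum.inr e' ∈ s e x := heq ▸ (hg e' he').2.1
    have h2 := hs_mem e he x hx _ h1
    have he'e : e' = e := by
      rcases h2 with h | h
      · exact absurd h (by simp)
      · exact Sum.inr.inj h
    rw [he'e] at heq
    rw [heq]
    exact (hs e x ⟨he, hx⟩).2.1
  -- for each edge, some endpoint's transmission is outside the image of g
  have hEx : ∀ e ∈ E, ∃ x, x ∈ e ∧ s e x ∉ E.image g := by
    intro e he
    have hx : e.out.1 ∈ e := Sym2.out_fst_mem e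
    have hy : Sym2.Mem.other hx ∈ e := Sym2.other_mem hx
    have hxy : Sym2.Mem.other hx ≠ e.out.1 := Sym2.other_ne (hE e he) hx
    by_contra hcon
    push_neg at hcon
    have h1 : Sum.inl e.out.1 ∈ g e := hD e he _ hx (hcon _ hx)
    have h2 : Sum.inl (Sym2.Mem.other hx) ∈ g e := hD e he _ hy (hcon _ hy)
    have hr : Sum.inr e ∈ g e := (hg e he).2.1
    have h3 : ({Sum.inl e.out.1, Sum.inl (Sym2.Mem.other hx), Sum.inr e} :
        Finset (V ⊕ Sym2 V)) ⊆ g e := by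
      intro c hc
      simp only [Finset.mem_insert, Finset.mem_singleton] at hc
      rcases hc with rfl | rfl | rfl <;> assumption
    have hcard : 3 ≤ (g e).card := by
      calc 3 = ({Sum.inl e.out.1, Sum.inl (Sym2.Mem.other hx), Sum.inr e} :
              Finset (V ⊕ Sym2 V)).card := by
              have hne1 : (Sum.inl e.out.1 : V ⊕ Sym2 V) ∉
                  ({Sum.inl (Sym2.Mem.other hx), Sum.inr e} : Finset (V ⊕ Sym2 V)) := by
                simp only [Finset.mem_insert, Finset.mem_singleton]
                intro h
                rcases h with h | h
                · exact hxy (Sum.inl.inj h).symm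
                · exact absurd h (by simp)
              rw [Finset.card_insert_of_notMem hne1,
                Finset.card_insert_of_notMem (by simp), Finset.card_singleton]
        _ ≤ (g e).card := Finset.card_le_card h3
    have := hsparse _ (hg e he).1
    omega
  -- totalize and choose the uncovered endpoint
  have hEx' : ∀ e : Sym2 V, ∃ x, e ∈ E → (x ∈ e ∧ s e x ∉ E.image g) := by
    intro e
    by_cases h : e ∈ E
    · obtain ⟨x, hx⟩ := hEx e h; exact ⟨x, fun _ => hx⟩
    · exact ⟨e.out.1, fun h' => absurd h' h⟩
  choose f hf using hEx'
  set Λt := E.image f with hΛt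
  refine ⟨Λt, ?_, ?_⟩
  · intro e he
    exact ⟨f e, (hf e he).1, Finset.mem_image_of_mem f he⟩
  · -- witness edge for each vertex in Λt
    have hw' : ∀ x : V, ∃ e, x ∈ Λt → (e ∈ E ∧ f e = x) := by
      intro x
      by_cases h : x ∈ Λt
      · obtain ⟨e, he, hfe⟩ := Finset.mem_image.1 h
        exact ⟨e, fun _ => ⟨he, hfe⟩⟩
      · exact ⟨s(x, x), fun h' => absurd h' h⟩
    choose w hw using hw'
    -- injection from Λt into T \ E.image g
    have hginj : Set.InjOn g E := by
      intro e he e' he' heq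
      have h1 : Sum.inr e' ∈ g e := heq ▸ (hg e' he').2.1
      by_contra hne
      have h2 := (hg e he).2.2 _ (Finset.mem_erase.2 ⟨by simpa using fun h => hne h.symm, h1⟩)
      obtain ⟨z, _, hz⟩ := h2
      exact absurd hz (by simp)
    have hcard1 : (E.image g).card = E.card := Finset.card_image_of_injOn hginj
    have hsub : E.image g ⊆ T := by
      intro t ht
      obtain ⟨e, he, rfl⟩ := Finset.mem_image.1 ht
      exact (hg e he).1
    have hcard2 : Λt.card ≤ (T \ E.image g).card := by
      apply Finset.card_le_card_of_injOn (fun x => s (w x) x)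
      · intro x hx
        obtain ⟨heE, hfx⟩ := hw x hx
        have hxe : x ∈ w x := by
          have h0 := (hf (w x) heE).1; rwa [hfx] at h0
        refine Finset.mem_sdiff.2 ⟨(hs (w x) x ⟨heE, hxe⟩).1, ?_⟩
        have := (hf (w x) heE).2
        rwa [hfx] at this
      · intro x hx x' hx' heq
        obtain ⟨heE, hfx⟩ := hw x hx
        obtain ⟨heE', hfx'⟩ := hw x' hx'
        have hxe : x ∈ w x := by
          have h0 := (hf (w x) heE).1; rwa [hfx] at h0
        have hxe' : x' ∈ w x' := by
          have h0 := (hf (w x') heE').1; rwa [hfx'] at h0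
        have h1 : Sum.inl x' ∈ s (w x) x := by
          show Sum.inl x' ∈ (fun x => s (w x) x) x
          rw [heq]; exact (hs (w x') x' ⟨heE', hxe'⟩).2.1
        rcases hs_mem (w x) heE x hxe _ h1 with h | h
        · exact (Sum.inl.inj h).symm
        · exact absurd h (by simp)
    have hT : (T \ E.image g).card + (E.image g).card = T.card :=
      Finset.card_sdiff_add_card_eq_card hsub
    omega
end
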